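/- Suppose α_1,…,α_{N+1} ∈ K are nonzero and satisfy α_{i+1} = α_{i−1} y_i^{−1} for 2 ≤ i ≤ N, α_2 α_{N+1} = y_1^{−1}, and α_1 α_N = y_{N+1}. Then: (i) if N is even, α_1 α_2 = y_1^{−1} y_2 y_4 ⋯ y_N and α_1 α_2 = y_3 y_5 ⋯ y_{N+1}, and consequently the initial coefficients necessarily satisfy y_1 y_3 y_5 ⋯ y_{N+1} = y_2 y_4 ⋯ y_N; (ii) if N is odd, (α_2)^2 = y_1^{−1} y_3 y_5 ⋯ y_N and (α_1)^2 = y_2 y_4 ⋯ y_{N+1}. -/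

import Mathlib

theorem stmt9 {K : Type*} [Field K] (N : ℕ) (hN : 2 ≤ N) (y α : ℕ → K)
    (hy : ∀ j, 1 ≤ j → j ≤ N + 1 → y j ≠ 0)
    (hα : ∀ i, 1 ≤ i → i ≤ N + 1 → α i ≠ 0)
    (hα1 : ∀ i, 2 ≤ i → i ≤ N → α (i + 1) = α (i - 1) * (y i)⁻¹)
    (hα2 : α 2 * α (N + 1) = (y 1)⁻¹)
    (hα3 : α 1 * α N = y (N + 1)) :
    (Even N →
      α 1 * α 2 = (y 1)⁻¹ * ∏ j ∈ Finset.Icc 1 (N / 2), y (2 * j) ∧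
      α 1 * α 2 = ∏ j ∈ Finset.Icc 1 (N / 2), y (2 * j + 1) ∧
      y 1 * ∏ j ∈ Finset.Icc 1 (N / 2), y (2 * j + 1) =
        ∏ j ∈ Finset.Icc 1 (N / 2), y (2 * j)) ∧
    (Odd N →
      α 2 ^ 2 = (y 1)⁻¹ * ∏ j ∈ Finset.Icc 1 ((N - 1) / 2), y (2 * j + 1) ∧
      α 1 ^ 2 = ∏ j ∈ Finset.Icc 1 ((N + 1) / 2), y (2 * j)) := by
  have keyA : ∀ m, 2 * m ≤ N →
      α (2 * m + 1) * ∏ j ∈ Finset.Icc 1 m, y (2 * j) = α 1 := by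
    intro m
    induction m with
    | zero => intro _; simp
    | succ m ih =>
      intro hm
      have h1 : 2 * m ≤ N := by omega
      have hrec : α (2 * (m + 1) + 1) = α (2 * m + 1) * (y (2 * m + 2))⁻¹ := by
        have h := hα1 (2 * m + 2) (by omega) (by omega)
        have e1 : 2 * m + 2 + 1 = 2 * (m + 1) + 1 := by ring
        have e2 : 2 * m + 2 - 1 = 2 * m + 1 := by omega
        rw [e1, e2] at h
        exact h
      have hy' : y (2 * m + 2) ≠ 0 := hy _ (by omega) (by omega)
      rw [Finset.prod_Icc_succ_top (by omega : 1 ≤ m + 1), hrec]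
      have e3 : 2 * (m + 1) = 2 * m + 2 := by ring
      rw [e3]
      have := ih h1
      field_simp
      linear_combination this
  have keyB : ∀ m, 2 * m + 1 ≤ N →
      α (2 * m + 2) * ∏ j ∈ Finset.Icc 1 m, y (2 * j + 1) = α 2 := by
    intro m
    induction m with
    | zero => intro _; simp
    | succ m ih =>
      intro hm
      have h1 : 2 * m + 1 ≤ N := by omega
      have hrec : α (2 * (m + 1) + 2) = α (2 * m + 2) * (y (2 * m + 3))⁻¹ := by
        have h := hα1 (2 * m + 3) (by omega) (by omega)
        have e1 : 2 * m + 3 + 1 = 2 * (m + 1) + 2 := by ring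
        have e2 : 2 * m + 3 - 1 = 2 * m + 2 := by omega
        rw [e1, e2] at h
        exact h
      have hy' : y (2 * m + 3) ≠ 0 := hy _ (by omega) (by omega)
      rw [Finset.prod_Icc_succ_top (by omega : 1 ≤ m + 1), hrec]
      have e3 : 2 * (m + 1) + 1 = 2 * m + 3 := by ring
      rw [e3]
      have := ih h1
      field_simp
      linear_combination this
  constructor
  · rintro ⟨m, hm⟩
    have hmN : N = 2 * m := by omega
    have hm1 : 1 ≤ m := by omega
    have hdiv : N / 2 = m := by omega
    subst hmN
    rw [hdiv]
    have hA := keyA m (le_refl _)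
    have hB := keyB (m - 1) (by omega)
    have e4 : 2 * (m - 1) + 2 = 2 * m := by omega
    rw [e4] at hB
    have hP : (∏ j ∈ Finset.Icc 1 m, y (2 * j)) ≠ 0 := by
      rw [Finset.prod_ne_zero_iff]
      intro j hj
      simp only [Finset.mem_Icc] at hj
      exact hy _ (by omega) (by omega)
    have c1 : α 1 * α 2 = (y 1)⁻¹ * ∏ j ∈ Finset.Icc 1 m, y (2 * j) := by
      rw [← hα2]
      linear_combination -α 2 * hA
    have c2 : α 1 * α 2 = ∏ j ∈ Finset.Icc 1 m, y (2 * j + 1) := by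
      have e5 : m = (m - 1) + 1 := by omega
      rw [e5, Finset.prod_Icc_succ_top (by omega : 1 ≤ m - 1 + 1), ← e5]
      calc α 1 * α 2 = α 1 * (α (2 * m) * ∏ j ∈ Finset.Icc 1 (m-1), y (2*j+1)) := by
              rw [hB]
        _ = (α 1 * α (2 * m)) * ∏ j ∈ Finset.Icc 1 (m-1), y (2*j+1) := by ring
        _ = y (2 * m + 1) * ∏ j ∈ Finset.Icc 1 (m-1), y (2*j+1) := by rw [hα3]
        _ = _ := by ring
    refine ⟨c1, c2, ?_⟩
    have hy1 : y 1 ≠ 0 := hy 1 (by omega) (by omega)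
    rw [← c2, c1]
    field_simp
  · rintro ⟨m, hm⟩
    have hm1 : 1 ≤ m := by omega
    have hd1 : (N - 1) / 2 = m := by omega
    have hd2 : (N + 1) / 2 = m + 1 := by omega
    rw [hd1, hd2]
    have hA := keyA m (by omega)
    have hB := keyB m (by omega)
    have e1 : 2 * m + 2 = N + 1 := by omega
    have e2 : 2 * m + 1 = N := by omega
    rw [e1] at hB
    rw [e2] at hA
    constructor
    · have hP : (∏ j ∈ Finset.Icc 1 m, y (2 * j + 1)) ≠ 0 := by
        rw [Finset.prod_ne_zero_iff]
        intro j hj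
        simp only [Finset.mem_Icc] at hj
        exact hy _ (by omega) (by omega)
      rw [← hα2]
      linear_combination -α 2 * hB
    · rw [Finset.prod_Icc_succ_top (by omega : 1 ≤ m + 1)]
      have e3 : 2 * (m + 1) = N + 1 := by omega
      rw [e3]
      rw [← hα3]
      linear_combination -α 1 * hA
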